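/- Let L be a finite generic contact system of line segments in ℝ² containing at least one contact, i.e. some endpoint of a segment of L lies in the interior of another segment of L. Then L has three distinct free endpoints p₁, p₂, p₃ that are not collinear (they do not all lie on one line). -/

import Mathlib

noncomputable section

/-- The Euclidean plane. -/
abbrev Pt := EuclideanSpace ℝ (Fin 2)

/-- `S` is a (nondegenerate, closed) line segment in the plane. -/
def IsSeg (S : Set Pt) : Prop := ∃ p q : Pt, p ≠ q ∧ S = segment ℝ p q

/-- `x` is an endpoint of the segment `S`. -/
def IsEndpt (x : Pt) (S : Set Pt) : Prop :=
  ∃ p q : Pt, p ≠ q ∧ S = segment ℝ p q ∧ (x = p ∨ x = q)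

/-- `x` is an interior (relative interior) point of the segment `S`. -/
def IsIntPt (x : Pt) (S : Set Pt) : Prop :=
  ∃ p q : Pt, p ≠ q ∧ S = segment ℝ p q ∧ x ∈ openSegment ℝ p q

/-- A contact system: a collection of (pairwise distinct) segments such that no
point of the plane is an interior point of more than one segment. -/
def IsContactSystem (L : Set (Set Pt)) : Prop :=
  (∀ S ∈ L, IsSeg S) ∧
  ∀ x : Pt, ∀ S ∈ L, ∀ T ∈ L, IsIntPt x S → IsIntPt x T → S = T

/-- A 2-contact system: a contact system such that every point of the plane
belongs to at most two of the segments. -/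
def Is2ContactSystem (L : Set (Set Pt)) : Prop :=
  IsContactSystem L ∧
  ∀ x : Pt, ∀ S ∈ L, ∀ T ∈ L, ∀ U ∈ L,
    x ∈ S → x ∈ T → x ∈ U → (S = T ∨ S = U ∨ T = U)

/-- A generic contact system: a contact system such that moreover no point of
the plane is an endpoint of more than one segment. -/
def IsGenericCS (L : Set (Set Pt)) : Prop :=
  IsContactSystem L ∧
  ∀ x : Pt, ∀ S ∈ L, ∀ T ∈ L, IsEndpt x S → IsEndpt x T → S = T

/-- `x` is a free endpoint of the family `M`: an endpoint of some segment of `M`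
that lies in the interior of no segment of `M`. -/
def IsFreeEndpt (x : Pt) (M : Set (Set Pt)) : Prop :=
  (∃ l ∈ M, IsEndpt x l) ∧ ∀ m ∈ M, ¬ IsIntPt x m

/-- The group of isometries of the plane (every isometry of the plane is affine). -/
abbrev Iso2 := Pt ≃ᵃⁱ[ℝ] Pt

/-- The determinant of the linear part of a plane isometry. -/
def detOf (g : Iso2) : ℝ :=
  LinearMap.det g.linearIsometryEquiv.toLinearEquiv.toLinearMap

/-- A rotation: a non-identity orientation-preserving isometry with a fixed point. -/
def IsRotation (g : Iso2) : Prop := g ≠ 1 ∧ detOf g = 1 ∧ ∃ x : Pt, g x = x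

/-- A reflection: an orientation-reversing isometry with a fixed point. -/
def IsReflection (g : Iso2) : Prop := detOf g ≠ 1 ∧ ∃ x : Pt, g x = x

/-- A translation: the map `x ↦ x + v` for some `v ≠ 0`. -/
def IsTranslation (g : Iso2) : Prop := ∃ v : Pt, v ≠ 0 ∧ ∀ x : Pt, g x = x + v

/-- (S1): the collection `L` of segments is invariant under `Γ`. -/
def SatS1 (Γ : Subgroup Iso2) (L : Set (Set Pt)) : Prop :=
  ∀ l ∈ L, ∀ g ∈ Γ, (⇑g) '' l ∈ L

/-- (S2): `L` has finitely many `Γ`-orbits. -/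
def SatS2 (Γ : Subgroup Iso2) (L : Set (Set Pt)) : Prop :=
  ∃ T : Set (Set Pt), T.Finite ∧ T ⊆ L ∧
    ∀ l ∈ L, ∃ t ∈ T, ∃ g ∈ Γ, (⇑g) '' t = l

/-- (S4): for every `l ∈ L` and every `x ∈ l` the stabiliser of `x` in `Γ` is trivial. -/
def SatS4 (Γ : Subgroup Iso2) (L : Set (Set Pt)) : Prop :=
  ∀ l ∈ L, ∀ x ∈ l, ∀ g ∈ Γ, g x = x → g = 1

/-- A subgroup of the isometry group of the plane is discrete iff (equivalently,
for subgroups of `Isom(ℝ²)`, in the natural topology) each of its orbits is a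
discrete subset of the plane. -/
def IsDiscreteSubgrp (Γ : Subgroup Iso2) : Prop :=
  ∀ x : Pt, DiscreteTopology {y : Pt | ∃ g ∈ Γ, g x = y}

/-- A generic `Γ`-symmetric contact system: satisfies (S1)-(S4). -/
def IsGenSymmCS (Γ : Subgroup Iso2) (L : Set (Set Pt)) : Prop :=
  IsGenericCS L ∧ SatS1 Γ L ∧ SatS2 Γ L ∧ SatS4 Γ L

end


lemma collinear_coe_affineSpan {s : Set Pt} (h : Collinear ℝ s) :
    Collinear ℝ ((affineSpan ℝ s : AffineSubspace ℝ Pt) : Set Pt) := by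
  unfold Collinear at *
  rwa [← AffineSubspace.direction_eq_vectorSpan, direction_affineSpan]

lemma exists_noncollinear_triple {s : Set Pt} (h : ¬ Collinear ℝ s) :
    ∃ p₁ ∈ s, ∃ p₂ ∈ s, ∃ p₃ ∈ s, ¬ Collinear ℝ ({p₁, p₂, p₃} : Set Pt) := by
  by_contra hc
  push_neg at hc
  apply h
  rcases Set.subsingleton_or_nontrivial s with hs | hs
  · rcases hs.eq_empty_or_singleton with rfl | ⟨p, rfl⟩
    · exact collinear_empty ℝ _
    · exact collinear_singleton ℝ p
  · obtain ⟨p, hp, q, hq, hpq⟩ := hs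
    have hsub : s ⊆ ((affineSpan ℝ ({p, q} : Set Pt) : AffineSubspace ℝ Pt) : Set Pt) := by
      intro x hx
      exact (hc p hp q hq x hx).mem_affineSpan_of_mem_of_ne
        (Set.mem_insert _ _) (Set.mem_insert_of_mem _ (Set.mem_insert _ _))
        (Set.mem_insert_of_mem _ (Set.mem_insert_of_mem _ rfl)) hpq
    exact (collinear_coe_affineSpan (collinear_pair ℝ p q)).subset hsub

/-- a contact makes the union non-collinear -/
lemma not_collinear_of_contact (L : Set (Set Pt)) (hL : IsContactSystem L)
    (hcontact : ∃ l ∈ L, ∃ m ∈ L, l ≠ m ∧ ∃ x : Pt, IsEndpt x l ∧ IsIntPt x m) :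
    ¬ Collinear ℝ (⋃₀ L) := by
  intro hcol
  obtain ⟨l, hl, m, hm, hlm, x, hxl, hxm⟩ := hcontact
  obtain ⟨c, d, hcd, hmeq, hxcd⟩ := hxm
  -- WLOG x is the first endpoint of l
  obtain ⟨b, hxb, hleq⟩ : ∃ b : Pt, x ≠ b ∧ l = segment ℝ x b := by
    obtain ⟨a, b, hab, hleq, hx⟩ := hxl
    rcases hx with rfl | rfl
    · exact ⟨b, hab, hleq⟩
    · exact ⟨a, hab.symm, by rw [hleq, segment_symm]⟩
  have hxU : x ∈ ⋃₀ L := ⟨m, hm, hmeq ▸ openSegment_subset_segment ℝ c d hxcd⟩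
  rw [collinear_iff_of_mem hxU] at hcol
  obtain ⟨v, hv⟩ := hcol
  obtain ⟨tb, hb⟩ := hv b ⟨l, hl, hleq ▸ right_mem_segment ℝ x b⟩
  obtain ⟨tc, hcc⟩ := hv c ⟨m, hm, hmeq ▸ left_mem_segment ℝ c d⟩
  obtain ⟨td, hd⟩ := hv d ⟨m, hm, hmeq ▸ right_mem_segment ℝ c d⟩
  -- x ∈ openSegment c d : x = (1-θ)c + θd
  obtain ⟨u, w, hu, hw, huw, hx⟩ := hxcd
  -- coordinates
  have hvne : tb ≠ 0 ∧ v ≠ 0 := by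
    constructor <;> rintro rfl <;> [skip; skip] <;> simp_all
  have hDne : td - tc ≠ 0 := by
    intro h
    apply hcd
    have : td = tc := by linarith
    rw [hcc, hd, this]
  have hwu : u = 1 - w := by linarith
  have hkey : u * tc + w * td = 0 := by
    have h1 : (u * tc + w * td) • v = 0 := by
      have := hx
      rw [hcc, hd] at this
      have h2 : u • (tc • v +ᵥ x) + w • (td • v +ᵥ x) = x := this
      simp only [vadd_eq_add, smul_add, smul_smul] at h2
      have h3 : (u * tc) • v + (w * td) • v + (u + w) • x = x := by
        rw [add_smul]; abel_nf; abel_nf at h2; linear_combination (norm := module) h2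
      rw [huw, one_smul] at h3
      have := congrArg (· - x) h3
      simpa [add_smul] using this
    by_contra hne
    exact hvne.2 (by simpa [hne] using (smul_eq_zero.mp h1).resolve_left hne)
  set R := tb / (td - tc) with hR
  set ε := min (1/2 : ℝ) (min w (1 - w) / (2 * (|R| + 1))) with hε
  have hRpos : 0 < |R| + 1 := by positivity
  have hwmin : 0 < min w (1 - w) := lt_min hw (by linarith)
  have hεpos : 0 < ε := lt_min (by norm_num) (by positivity)
  have hεlt : ε < 1 := lt_of_le_of_lt (min_le_left _ _) (by norm_num)
  have hεR : ε * |R| < min w (1 - w) := by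
    have h1 : ε ≤ min w (1 - w) / (2 * (|R| + 1)) := min_le_right _ _
    have h2 : ε * |R| ≤ (min w (1 - w) / (2 * (|R| + 1))) * |R| :=
      mul_le_mul_of_nonneg_right h1 (abs_nonneg _)
    have h3 : (min w (1 - w) / (2 * (|R| + 1))) * |R| < min w (1 - w) := by
      rw [div_mul_eq_mul_div, div_lt_iff₀ (by positivity)]
      nlinarith [abs_nonneg R, hwmin]
    linarith
  obtain ⟨σ, hσ⟩ : ∃ σ : ℝ, σ = w + ε * R := ⟨_, rfl⟩
  have hσpos : 0 < σ := by
    have : ε * R ≥ -(ε * |R|) := by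
      have := neg_abs_le (ε * R)
      rwa [abs_mul, abs_of_pos hεpos] at this
    have : ε * R > -(min w (1 - w)) := by linarith
    have hmw : min w (1 - w) ≤ w := min_le_left _ _
    rw [hσ]; linarith
  have hσlt : σ < 1 := by
    have : ε * R ≤ ε * |R| := by
      have := le_abs_self (ε * R)
      rwa [abs_mul, abs_of_pos hεpos] at this
    have hmw : min w (1 - w) ≤ 1 - w := min_le_right _ _
    rw [hσ]; linarith
  -- the key scalar identity
  have hRD : R * (td - tc) = tb := div_mul_cancel₀ _ hDne
  have h0 : tc + w * (td - tc) = 0 := by linear_combination hkey - tc * hwu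
  have hscal : tc + σ * (td - tc) = ε * tb := by
    rw [hσ]; linear_combination h0 + ε * hRD
  -- the common interior point
  set y : Pt := (1 - ε) • x + ε • b with hy
  have hym : (1 - σ) • c + σ • d = y := by
    rw [hcc, hd, hy, hb]
    simp only [vadd_eq_add]
    match_scalars
    · linear_combination hscal
    · ring
  have hIl : IsIntPt y l := ⟨x, b, hxb, hleq, ⟨1 - ε, ε, by linarith, hεpos, by ring, rfl⟩⟩
  have hIm : IsIntPt y m := ⟨c, d, hcd, hmeq, ⟨1 - σ, σ, by linarith, hσpos, by ring, hym⟩⟩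
  exact hlm (hL.2 y l hl m hm hIl hIm)

/-- A finite generic contact system with at least one contact
(an endpoint of a segment lying in the interior of another segment) has three
distinct non-collinear free endpoints. -/
theorem stmt_3 (L : Set (Set Pt)) (hfin : L.Finite) (hL : IsGenericCS L)
    (hcontact : ∃ l ∈ L, ∃ m ∈ L, l ≠ m ∧ ∃ x : Pt, IsEndpt x l ∧ IsIntPt x m) :
    ∃ p₁ p₂ p₃ : Pt, p₁ ≠ p₂ ∧ p₁ ≠ p₃ ∧ p₂ ≠ p₃ ∧
      IsFreeEndpt p₁ L ∧ IsFreeEndpt p₂ L ∧ IsFreeEndpt p₃ L ∧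
      ¬ Collinear ℝ ({p₁, p₂, p₃} : Set Pt) := by

  have hCS : IsContactSystem L := hL.1
  choose! P Q hPQ using hCS.1
  set E : Set Pt := ⋃ l ∈ L, ({P l, Q l} : Set Pt) with hE
  have hEfin : E.Finite := hfin.biUnion (fun l _ => (Set.finite_singleton _).insert _)
  set K := convexHull ℝ E with hK
  have hsubK : ∀ l ∈ L, l ⊆ K := by
    intro l hl
    rw [(hPQ l hl).2, hK, ← convexHull_pair]
    exact convexHull_mono (fun z hz => Set.mem_biUnion hl hz)
  have hUK : ⋃₀ L ⊆ K := Set.sUnion_subset hsubK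
  have hfree : ∀ x ∈ K.extremePoints ℝ, IsFreeEndpt x L := by
    intro x hx
    have hxK := hx.1
    have hext := (mem_extremePoints.mp hx).2
    have hxE : x ∈ E := extremePoints_convexHull_subset hx
    rw [hE] at hxE
    obtain ⟨l, hl, hxl⟩ := Set.mem_iUnion₂.mp hxE
    refine ⟨⟨l, hl, P l, Q l, (hPQ l hl).1, (hPQ l hl).2, ?_⟩, ?_⟩
    · rcases hxl with h | h
      · exact Or.inl h
      · exact Or.inr (Set.mem_singleton_iff.mp h)
    · rintro m hm ⟨c, d, hcd, hmeq, hxcd⟩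
      have hcK : c ∈ K := hsubK m hm (hmeq ▸ left_mem_segment ℝ c d)
      have hdK : d ∈ K := hsubK m hm (hmeq ▸ right_mem_segment ℝ c d)
      obtain ⟨h1, h2⟩ := hext c hcK d hdK hxcd
      exact hcd (h1.trans h2.symm)
  have hncU : ¬ Collinear ℝ (⋃₀ L) := not_collinear_of_contact L hCS hcontact
  have hncE : ¬ Collinear ℝ (K.extremePoints ℝ) := by
    intro hc
    apply hncU
    have hKM : closure (convexHull ℝ (K.extremePoints ℝ)) = K :=
      closure_convexHull_extremePoints (hEfin.isCompact_convexHull (𝕜 := ℝ)) (convex_convexHull ℝ E)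
    have hspan : closure (convexHull ℝ (K.extremePoints ℝ)) ⊆
        ((affineSpan ℝ (K.extremePoints ℝ) : AffineSubspace ℝ Pt) : Set Pt) :=
      closure_minimal (convexHull_subset_affineSpan _)
        (affineSpan ℝ (K.extremePoints ℝ)).closed_of_finiteDimensional
    rw [hKM] at hspan
    exact (collinear_coe_affineSpan hc).subset (hUK.trans hspan)
  obtain ⟨p₁, h1, p₂, h2, p₃, h3, hnc3⟩ := exists_noncollinear_triple hncE
  exact ⟨p₁, p₂, p₃, ne₁₂_of_not_collinear hnc3, ne₁₃_of_not_collinear hnc3,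
    ne₂₃_of_not_collinear hnc3, hfree _ h1, hfree _ h2, hfree _ h3, hnc3⟩
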